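/- arXiv:2310.05466 — 2 statements merged into one kernel-verified Lean document; each statement's English description precedes it below -/
import Mathlib

section
/- Let f : ℝ_{>0}^n → ℝ, f(x) = ∑_{μ ∈ σ(f)} c_μ x^μ be a signomial. If σ(f) has a strict separating hyperplane, then f satisfies the closure property, that is, the closure of f^{-1}(ℝ_{<0}) in ℝ_{>0}^n equals f^{-1}(ℝ_{≤0}). -/
open Finset

/-- The signomial `x ↦ ∑_{μ ∈ S} c μ * x^μ` (with real exponents, via `Real.rpow`). -/
noncomputable def sig {n : ℕ} (S : Finset (Fin n → ℝ)) (c : (Fin n → ℝ) → ℝ)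
    (x : Fin n → ℝ) : ℝ :=
  ∑ μ ∈ S, c μ * ∏ i, x i ^ μ i

open Classical in
/-- The restriction `f|_F` of the signomial to a subset `F ⊆ ℝⁿ` of exponent vectors. -/
noncomputable def sigOn {n : ℕ} (S : Finset (Fin n → ℝ)) (c : (Fin n → ℝ) → ℝ)
    (F : Set (Fin n → ℝ)) (x : Fin n → ℝ) : ℝ :=
  ∑ μ ∈ S, if μ ∈ F then c μ * ∏ i, x i ^ μ i else 0

/-- `f⁻¹(ℝ_{<0})`: the points of the positive orthant where the signomial is negative. -/
def negSet {n : ℕ} (S : Finset (Fin n → ℝ)) (c : (Fin n → ℝ) → ℝ) : Set (Fin n → ℝ) :=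
  {x | (∀ i, 0 < x i) ∧ sig S c x < 0}

/-- `(f|_F)⁻¹(ℝ_{<0})`. -/
def negSetOn {n : ℕ} (S : Finset (Fin n → ℝ)) (c : (Fin n → ℝ) → ℝ)
    (F : Set (Fin n → ℝ)) : Set (Fin n → ℝ) :=
  {x | (∀ i, 0 < x i) ∧ sigOn S c F x < 0}

/-- `σ₊(f)`: the positive exponent vectors. -/
def sigPos' {n : ℕ} (S : Finset (Fin n → ℝ)) (c : (Fin n → ℝ) → ℝ) : Set (Fin n → ℝ) :=
  {μ | μ ∈ S ∧ 0 < c μ}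

/-- `σ₋(f)`: the negative exponent vectors. -/
def sigNeg' {n : ℕ} (S : Finset (Fin n → ℝ)) (c : (Fin n → ℝ) → ℝ) : Set (Fin n → ℝ) :=
  {μ | μ ∈ S ∧ c μ < 0}

/-- The hyperplane `H_{v,a}`. -/
def Hyp {n : ℕ} (v : Fin n → ℝ) (a : ℝ) : Set (Fin n → ℝ) :=
  {μ | ∑ i, v i * μ i = a}

/-- The closed half-space `H⁺_{v,a}`. -/
def Hplus {n : ℕ} (v : Fin n → ℝ) (a : ℝ) : Set (Fin n → ℝ) :=
  {μ | a ≤ ∑ i, v i * μ i}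

/-- The closed half-space `H⁻_{v,a}`. -/
def Hminus {n : ℕ} (v : Fin n → ℝ) (a : ℝ) : Set (Fin n → ℝ) :=
  {μ | ∑ i, v i * μ i ≤ a}

/-- The open half-space `H^{+,∘}_{v,a}`. -/
def HplusO {n : ℕ} (v : Fin n → ℝ) (a : ℝ) : Set (Fin n → ℝ) :=
  {μ | a < ∑ i, v i * μ i}

/-- The open half-space `H^{-,∘}_{v,a}`. -/
def HminusO {n : ℕ} (v : Fin n → ℝ) (a : ℝ) : Set (Fin n → ℝ) :=
  {μ | ∑ i, v i * μ i < a}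

/-- `U` is a connected component of `X` (a maximal nonempty preconnected subset of `X`). -/
def IsConnComp {n : ℕ} (X U : Set (Fin n → ℝ)) : Prop :=
  U.Nonempty ∧ U ⊆ X ∧ IsPreconnected U ∧
    ∀ W, U ⊆ W → W ⊆ X → IsPreconnected W → W = U

/-- The number (cardinality) of connected components of `X`. -/
noncomputable def compCard {n : ℕ} (X : Set (Fin n → ℝ)) : Cardinal :=
  Cardinal.mk {U : Set (Fin n → ℝ) // IsConnComp X U}

/-- The face `N(f)_v` of the Newton polytope of a signomial with support `S`,
with outer normal vector `v`. -/
def faceOf {n : ℕ} (S : Finset (Fin n → ℝ)) (v : Fin n → ℝ) : Set (Fin n → ℝ) :=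
  {ω ∈ convexHull ℝ (↑S : Set (Fin n → ℝ)) |
    ∀ μ ∈ convexHull ℝ (↑S : Set (Fin n → ℝ)), ∑ i, v i * μ i ≤ ∑ i, v i * ω i}

lemma prod_scale_rpow {n : ℕ} (x : Fin n → ℝ) (hx : ∀ i, 0 < x i) {t : ℝ} (ht : 0 < t)
    (μ v : Fin n → ℝ) :
    ∏ i, (x i * t ^ v i) ^ μ i = (∏ i, x i ^ μ i) * t ^ (∑ i, v i * μ i) := by
  calc ∏ i, (x i * t ^ v i) ^ μ i
      = ∏ i, (x i ^ μ i * Real.exp (Real.log t * (v i * μ i))) := by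
        refine Finset.prod_congr rfl fun i _ => ?_
        rw [Real.mul_rpow (hx i).le (Real.rpow_nonneg ht.le _),
          ← Real.rpow_mul ht.le, Real.rpow_def_of_pos ht]
    _ = (∏ i, x i ^ μ i) * ∏ i, Real.exp (Real.log t * (v i * μ i)) :=
        Finset.prod_mul_distrib
    _ = (∏ i, x i ^ μ i) * t ^ (∑ i, v i * μ i) := by
        rw [← Real.exp_sum, Real.rpow_def_of_pos ht, Finset.mul_sum]


/-- Proposition 3.9(i): if the support has a strict separating hyperplane, then `f` satisfies
the closure property: the closure of `f⁻¹(ℝ_{<0})` in the positive orthant equals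
`f⁻¹(ℝ_{≤0})`. -/
theorem stmt_16 (n : ℕ) (S : Finset (Fin n → ℝ)) (c : (Fin n → ℝ) → ℝ)
    (hc : ∀ μ ∈ S, c μ ≠ 0)
    (v : Fin n → ℝ) (hv : v ≠ 0) (a : ℝ)
    (hsepneg : sigNeg' S c ⊆ Hplus v a) (hseppos : sigPos' S c ⊆ Hminus v a)
    (hstrict : (sigNeg' S c ∩ HplusO v a).Nonempty) :
    closure (negSet S c) ∩ {x : Fin n → ℝ | ∀ i, 0 < x i} =
      {x : Fin n → ℝ | (∀ i, 0 < x i) ∧ sig S c x ≤ 0} := by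
  obtain ⟨μ₀, hμ₀neg, hμ₀a⟩ := hstrict
  obtain ⟨hμ₀S, hcμ₀⟩ := hμ₀neg
  ext x
  simp only [Set.mem_inter_iff, Set.mem_setOf_eq]
  constructor
  · rintro ⟨hcl, hpos⟩
    refine ⟨hpos, ?_⟩
    by_contra h
    push_neg at h
    have hcont : ContinuousAt (sig S c) x := by
      unfold sig
      refine tendsto_finset_sum _ fun μ _ => ?_
      refine Filter.Tendsto.const_mul _ ?_
      refine tendsto_finset_prod _ fun i _ => ?_
      exact ContinuousAt.rpow_const (continuous_apply i).continuousAt (Or.inl (hpos i).ne')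
    have hnb : {y | 0 < sig S c y} ∈ nhds x := hcont (Ioi_mem_nhds h)
    obtain ⟨y, hy1, hy2⟩ := mem_closure_iff_nhds.mp hcl _ hnb
    exact absurd hy2.2 (not_lt.mpr hy1.le)
  · rintro ⟨hpos, hle⟩
    refine ⟨?_, hpos⟩
    set γ : ℝ → (Fin n → ℝ) := fun t i => x i * t ^ v i with hγ
    have hγ1 : γ 1 = x := by
      funext i; simp [hγ, Real.one_rpow]
    have htend : Filter.Tendsto γ (nhdsWithin 1 (Set.Ioi 1)) (nhds x) := by
      rw [← hγ1]
      refine Filter.Tendsto.mono_left ?_ nhdsWithin_le_nhds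
      rw [tendsto_pi_nhds]
      intro i
      exact (continuousAt_const.mul
        (ContinuousAt.rpow_const continuousAt_id (Or.inl one_ne_zero))).tendsto
    refine mem_closure_of_tendsto htend ?_
    filter_upwards [self_mem_nhdsWithin] with t ht
    replace ht : (1:ℝ) < t := ht
    have ht0 : (0:ℝ) < t := lt_trans one_pos ht
    constructor
    · intro i
      exact mul_pos (hpos i) (Real.rpow_pos_of_pos ht0 _)
    · have key : sig S c (γ t) < t ^ a * sig S c x := by
        unfold sig
        rw [Finset.mul_sum]
        refine Finset.sum_lt_sum (fun μ hμ => ?_) ⟨μ₀, hμ₀S, ?_⟩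
        · rw [show (γ t) = fun i => x i * t ^ v i from rfl]
          rw [prod_scale_rpow x hpos ht0]
          have hp : 0 < ∏ i, x i ^ μ i :=
            Finset.prod_pos fun i _ => Real.rpow_pos_of_pos (hpos i) _
          rcases lt_or_gt_of_ne (hc μ hμ) with hcneg | hcpos
          · have hva : a ≤ ∑ i, v i * μ i := hsepneg ⟨hμ, hcneg⟩
            have h2 : t ^ a ≤ t ^ (∑ i, v i * μ i) :=
              Real.rpow_le_rpow_of_exponent_le ht.le hva
            have h1 : c μ * ∏ i, x i ^ μ i < 0 := mul_neg_of_neg_of_pos hcneg hp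
            have h3 := mul_le_mul_of_nonpos_left h2 h1.le
            nlinarith [h3]
          · have hva : ∑ i, v i * μ i ≤ a := hseppos ⟨hμ, hcpos⟩
            have h2 : t ^ (∑ i, v i * μ i) ≤ t ^ a :=
              Real.rpow_le_rpow_of_exponent_le ht.le hva
            have h1 : 0 < c μ * ∏ i, x i ^ μ i := mul_pos hcpos hp
            have h3 := mul_le_mul_of_nonneg_left h2 h1.le
            nlinarith [h3]
        · rw [show (γ t) = fun i => x i * t ^ v i from rfl]
          rw [prod_scale_rpow x hpos ht0]
          have hp : 0 < ∏ i, x i ^ μ₀ i :=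
            Finset.prod_pos fun i _ => Real.rpow_pos_of_pos (hpos i) _
          have h2 : t ^ a < t ^ (∑ i, v i * μ₀ i) :=
            Real.rpow_lt_rpow_of_exponent_lt ht hμ₀a
          have h1 : c μ₀ * ∏ i, x i ^ μ₀ i < 0 := mul_neg_of_neg_of_pos hcμ₀ hp
          have h3 := mul_lt_mul_of_neg_left h2 h1
          nlinarith [h3]
      have : t ^ a * sig S c x ≤ 0 :=
        mul_nonpos_of_nonneg_of_nonpos (Real.rpow_pos_of_pos ht0 a).le hle
      linarith
end

section
/- Let f : ℝ_{>0}^n → ℝ, f(x) = ∑_{μ ∈ σ(f)} c_μ x^μ be a signomial. If there exists a proper face F of the Newton polytope N(f) with σ_-(f) ⊆ F, then f satisfies the closure property, that is, the closure of f^{-1}(ℝ_{<0}) in ℝ_{>0}^n equals f^{-1}(ℝ_{≤0}). -/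
open Finset

/-- `σ₊(f)`: the positive exponent vectors. -/
def sigPosSet {n : ℕ} (S : Finset (Fin n → ℝ)) (c : (Fin n → ℝ) → ℝ) : Set (Fin n → ℝ) :=
  {μ | μ ∈ S ∧ 0 < c μ}

/-- `σ₋(f)`: the negative exponent vectors. -/
def sigNegSet {n : ℕ} (S : Finset (Fin n → ℝ)) (c : (Fin n → ℝ) → ℝ) : Set (Fin n → ℝ) :=
  {μ | μ ∈ S ∧ c μ < 0}

lemma sig_continuousAt {n : ℕ} (S : Finset (Fin n → ℝ)) (c : (Fin n → ℝ) → ℝ)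
    {x : Fin n → ℝ} (hx : ∀ i, 0 < x i) : ContinuousAt (sig S c) x := by
  unfold sig
  refine tendsto_finset_sum _ fun μ _ => tendsto_const_nhds.mul
    (tendsto_finset_prod _ fun i _ => ?_)
  have h : ContinuousAt (fun y : Fin n → ℝ => y i ^ μ i) x :=
    ContinuousAt.comp (f := fun y : Fin n → ℝ => y i) (Real.continuousAt_rpow_const (x i) (μ i) (Or.inl (hx i).ne'))
      ((continuous_apply i).continuousAt (x := x))
  exact h

lemma sig_scale {n : ℕ} (S : Finset (Fin n → ℝ)) (c : (Fin n → ℝ) → ℝ)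
    (v : Fin n → ℝ) {x : Fin n → ℝ} (hx : ∀ i, 0 < x i) {t : ℝ} (ht : 0 < t) :
    sig S c (fun i => x i * t ^ v i) =
      ∑ μ ∈ S, (c μ * ∏ i, x i ^ μ i) * t ^ (∑ i, v i * μ i) := by
  unfold sig
  refine Finset.sum_congr rfl fun μ _ => ?_
  have h1 : ∀ i, (x i * t ^ v i) ^ μ i = x i ^ μ i * t ^ (v i * μ i) := fun i => by
    rw [Real.mul_rpow (hx i).le (Real.rpow_nonneg ht.le _), ← Real.rpow_mul ht.le]
  simp only [h1]
  rw [Finset.prod_mul_distrib, ← Real.rpow_sum_of_pos ht, mul_assoc]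

/-- Proposition 3.9(ii): if all negative exponent vectors lie on a proper face of the Newton
polytope, then `f` satisfies the closure property: the closure of `f⁻¹(ℝ_{<0})` in the
positive orthant equals `f⁻¹(ℝ_{≤0})`. -/
theorem stmt_17 (n : ℕ) (S : Finset (Fin n → ℝ)) (c : (Fin n → ℝ) → ℝ)
    (hc : ∀ μ ∈ S, c μ ≠ 0)
    (F : Set (Fin n → ℝ))
    (hF : ∃ v : Fin n → ℝ, F = faceOf S v)
    (hproper : F ≠ convexHull ℝ (↑S : Set (Fin n → ℝ)))
    (hneg : sigNegSet S c ⊆ F) :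
    closure (negSet S c) ∩ {x : Fin n → ℝ | ∀ i, 0 < x i} =
      {x : Fin n → ℝ | (∀ i, 0 < x i) ∧ sig S c x ≤ 0} := by
  obtain ⟨v, hFv⟩ := hF
  have hSne : S.Nonempty := by
    rcases S.eq_empty_or_nonempty with h | h
    · exfalso; apply hproper; rw [hFv, h]; simp [faceOf]
    · exact h
  set e : (Fin n → ℝ) → ℝ := fun μ => ∑ i, v i * μ i with he
  have hlin : IsLinearMap ℝ e := by
    constructor
    · intro p q; simp [he, mul_add, Finset.sum_add_distrib]
    · intro r p; simp [he, Finset.mul_sum, smul_eq_mul]; ring_nf;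
      exact Finset.sum_congr rfl fun i _ => by ring
  set a : ℝ := S.sup' hSne e with ha
  have hea : ∀ μ ∈ S, e μ ≤ a := fun μ hμ => Finset.le_sup' e hμ
  have hhull : ∀ ω ∈ convexHull ℝ (↑S : Set (Fin n → ℝ)), e ω ≤ a := fun ω hω =>
    convexHull_min (fun μ hμ => hea μ (by exact_mod_cast hμ)) (convex_halfSpace_le hlin a) hω
  obtain ⟨μa, hμaS, hμae⟩ := Finset.exists_mem_eq_sup' hSne e
  have hnegface : ∀ μ ∈ S, c μ < 0 → e μ = a := by
    intro μ hμ hcμ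
    have hμF : μ ∈ F := hneg ⟨hμ, hcμ⟩
    rw [hFv] at hμF
    obtain ⟨hμhull, hmax⟩ := hμF
    have h2 : e μa ≤ e μ := hmax μa (subset_convexHull ℝ _ (by exact_mod_cast hμaS))
    exact le_antisymm (hea μ hμ) (by rw [ha, hμae]; exact h2)
  have hstrict : ∃ μ0 ∈ S, e μ0 < a := by
    by_contra h
    push_neg at h
    have hall : ∀ μ ∈ S, e μ = a := fun μ hμ => le_antisymm (hea μ hμ) (h μ hμ)
    apply hproper
    rw [hFv]
    have hge : ∀ ω ∈ convexHull ℝ (↑S : Set (Fin n → ℝ)), a ≤ e ω := fun ω hω =>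
      convexHull_min (fun μ hμ => (hall μ (by exact_mod_cast hμ)).ge)
        (convex_halfSpace_ge hlin a) hω
    refine Set.Subset.antisymm (fun ω hω => hω.1) (fun ω hω => ⟨hω, fun μ hμ => ?_⟩)
    exact (hhull μ hμ).trans (hge ω hω)
  obtain ⟨μ0, hμ0S, hμ0⟩ := hstrict
  ext x
  simp only [Set.mem_inter_iff, Set.mem_setOf_eq]
  constructor
  · rintro ⟨hcl, hx⟩
    refine ⟨hx, ?_⟩
    haveI hne : (nhdsWithin x (negSet S c)).NeBot := mem_closure_iff_nhdsWithin_neBot.mp hcl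
    refine le_of_tendsto
      ((sig_continuousAt S c hx).continuousWithinAt (s := negSet S c)) ?_
    filter_upwards [self_mem_nhdsWithin] with y hy
    exact hy.2.le
  · rintro ⟨hx, hfx⟩
    refine ⟨?_, hx⟩
    have hlim : Filter.Tendsto (fun t : ℝ => fun i => x i * t ^ v i) (nhdsWithin 1 (Set.Ioi 1))
        (nhds x) := by
      rw [tendsto_pi_nhds]
      intro i
      have h1 : Filter.Tendsto (fun t : ℝ => x i * t ^ v i) (nhds 1) (nhds (x i * 1 ^ v i)) :=
        tendsto_const_nhds.mul (Real.continuousAt_rpow_const 1 (v i) (Or.inl one_ne_zero))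
      rw [Real.one_rpow, mul_one] at h1
      exact h1.mono_left nhdsWithin_le_nhds
    refine mem_closure_of_tendsto hlim ?_
    filter_upwards [self_mem_nhdsWithin] with t ht
    have ht1 : (1:ℝ) < t := ht
    have ht0 : (0:ℝ) < t := lt_trans one_pos ht1
    have hypos : ∀ i, 0 < x i * t ^ v i := fun i =>
      mul_pos (hx i) (Real.rpow_pos_of_pos ht0 _)
    refine ⟨hypos, ?_⟩
    rw [sig_scale S c v hx ht0]
    have key : ∑ μ ∈ S, (c μ * ∏ i, x i ^ μ i) * t ^ e μ <
        ∑ μ ∈ S, (c μ * ∏ i, x i ^ μ i) * t ^ a := by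
      apply Finset.sum_lt_sum
      · intro μ hμ
        rcases lt_or_gt_of_ne (hc μ hμ) with hneg' | hpos
        · rw [hnegface μ hμ hneg']
        · have hprod : 0 < ∏ i, x i ^ μ i :=
            Finset.prod_pos fun i _ => Real.rpow_pos_of_pos (hx i) _
          exact mul_le_mul_of_nonneg_left
            (Real.rpow_le_rpow_of_exponent_le ht1.le (hea μ hμ)) (mul_pos hpos hprod).le
      · refine ⟨μ0, hμ0S, ?_⟩
        have hpos0 : 0 < c μ0 := by
          rcases lt_or_gt_of_ne (hc μ0 hμ0S) with h' | h'
          · exact absurd (hnegface μ0 hμ0S h') (ne_of_lt hμ0)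
          · exact h'
        have hprod : 0 < ∏ i, x i ^ μ0 i :=
          Finset.prod_pos fun i _ => Real.rpow_pos_of_pos (hx i) _
        exact mul_lt_mul_of_pos_left (Real.rpow_lt_rpow_of_exponent_lt ht1 hμ0)
          (mul_pos hpos0 hprod)
    have heq : ∑ μ ∈ S, (c μ * ∏ i, x i ^ μ i) * t ^ a = t ^ a * sig S c x := by
      rw [sig, ← Finset.sum_mul, mul_comm]
    calc ∑ μ ∈ S, (c μ * ∏ i, x i ^ μ i) * t ^ e μ
        < t ^ a * sig S c x := by rw [← heq]; exact key
      _ ≤ 0 := mul_nonpos_of_nonneg_of_nonpos (Real.rpow_pos_of_pos ht0 a).le hfx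
end
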